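/- arXiv:1507.05567 — 2 statements merged into one kernel-verified Lean document; each statement's English description precedes it below -/
import Mathlib

section
/- Let T > 0, let f : ℝ → ℝ be a continuous T-periodic function that is not identically zero, and let α ∈ (0,1). If the function t ↦ I^α f(t) is bounded on (0,∞), then no almost periodic function (in the sense of Bohr) g : ℝ → ℝ agrees with I^α f on (0,∞); that is, I^α f is not the restriction to (0,∞) of an almost periodic function. -/
open MeasureTheory intervalIntegral Set

open Filter Topology

lemma ker_intble {r : ℝ} (hr : -1 < r) (f : ℝ → ℝ) (hf : Continuous f) (c a b : ℝ) :
    IntervalIntegrable (fun s => (c - s) ^ r * f s) volume a b := by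
  have h1 : IntervalIntegrable (fun s : ℝ => (c - s) ^ r) volume a b := by
    have := (intervalIntegrable_rpow' (a := c - a) (b := c - b) hr).comp_sub_left c
    simpa using this
  exact h1.mul_continuousOn hf.continuousOn

lemma shift_eq {T : ℝ} {f : ℝ → ℝ} (hf : Continuous f) (hper : Function.Periodic f T)
    {r : ℝ} (hr : -1 < r) (t : ℝ) :
    (∫ s in (0:ℝ)..(t + T), (t + T - s) ^ r * f s)
      = (∫ s in (0:ℝ)..T, (t + T - s) ^ r * f s) + ∫ s in (0:ℝ)..t, (t - s) ^ r * f s := by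
  have hint1 : IntervalIntegrable (fun s => (t + T - s) ^ r * f s) volume 0 T :=
    ker_intble hr f hf _ _ _
  have hint2 : IntervalIntegrable (fun s => (t + T - s) ^ r * f s) volume T (t + T) :=
    ker_intble hr f hf _ _ _
  rw [← intervalIntegral.integral_add_adjacent_intervals hint1 hint2]
  congr 1
  have := intervalIntegral.integral_comp_add_right (a := (0:ℝ)) (b := t)
    (fun s => (t + T - s) ^ r * f s) T
  rw [zero_add] at this
  rw [← this]
  apply intervalIntegral.integral_congr
  intro s _
  simp only [add_sub_add_right_eq_sub, hper s]

open MeasureTheory intervalIntegral Set Filter Topology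

-- bound: |∫₀ᵀ (t+T-s)^(α-1) f s| ≤ M * ((t+T)^α - t^α)/α  for t > 0
lemma c_bound {T : ℝ} (hT : 0 < T) {f : ℝ → ℝ} (hf : Continuous f)
    {M : ℝ} (hM : ∀ s ∈ Icc (0:ℝ) T, |f s| ≤ M)
    {α : ℝ} (hα0 : 0 < α) (hα1 : α < 1) {t : ℝ} (ht : 0 < t) :
    |∫ s in (0:ℝ)..T, (t + T - s) ^ (α - 1) * f s| ≤ M * (((t + T) ^ α - t ^ α) / α) := by
  have hr : (-1:ℝ) < α - 1 := by linarith
  have hint : IntervalIntegrable (fun s => (t + T - s) ^ (α-1) * f s) volume 0 T :=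
    ker_intble hr f hf _ _ _
  have habs : IntervalIntegrable (fun s => |(t + T - s) ^ (α-1) * f s|) volume 0 T := hint.abs
  have hker : IntervalIntegrable (fun s : ℝ => (t + T - s) ^ (α-1) * M) volume 0 T :=
    ker_intble hr (fun _ => M) continuous_const _ _ _
  have h1 : |∫ s in (0:ℝ)..T, (t + T - s) ^ (α - 1) * f s|
      ≤ ∫ s in (0:ℝ)..T, |(t + T - s) ^ (α - 1) * f s| :=
    intervalIntegral.abs_integral_le_integral_abs hT.le
  have h2 : (∫ s in (0:ℝ)..T, |(t + T - s) ^ (α - 1) * f s|)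
      ≤ ∫ s in (0:ℝ)..T, (t + T - s) ^ (α-1) * M := by
    apply intervalIntegral.integral_mono_on hT.le habs hker
    intro s hs
    rw [abs_mul, abs_of_nonneg (Real.rpow_nonneg (by linarith [hs.1, hs.2] : (0:ℝ) ≤ t + T - s) _)]
    exact mul_le_mul_of_nonneg_left (hM s hs)
      (Real.rpow_nonneg (by linarith [hs.1, hs.2]) _)
  have h3 : (∫ s in (0:ℝ)..T, (t + T - s) ^ (α-1) * M)
      = M * (((t + T) ^ α - t ^ α) / α) := by
    have : (∫ s in (0:ℝ)..T, (t + T - s) ^ (α-1) * M)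
        = (∫ s in (0:ℝ)..T, (t + T - s) ^ (α-1)) * M := by
      rw [← intervalIntegral.integral_mul_const]
    rw [this]
    have hcomp := intervalIntegral.integral_comp_sub_left (a := (0:ℝ)) (b := T)
      (fun u : ℝ => u ^ (α - 1)) (t + T)
    rw [hcomp]
    have : (t + T - T) = t := by ring
    rw [this, integral_rpow (Or.inl hr)]
    have : α - 1 + 1 = α := by ring
    rw [this]
    ring
  calc |∫ s in (0:ℝ)..T, (t + T - s) ^ (α - 1) * f s|
      ≤ ∫ s in (0:ℝ)..T, |(t + T - s) ^ (α - 1) * f s| := h1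
    _ ≤ ∫ s in (0:ℝ)..T, (t + T - s) ^ (α-1) * M := h2
    _ = M * (((t + T) ^ α - t ^ α) / α) := h3

lemma rpow_diff_tendsto {T α : ℝ} (hT : 0 < T) (hα0 : 0 < α) (hα1 : α < 1) :
    Tendsto (fun t : ℝ => (t + T) ^ α - t ^ α) atTop (𝓝 0) := by
  have hub : ∀ᶠ t : ℝ in atTop, (t + T) ^ α - t ^ α ≤ α * T * t ^ (α - 1) := by
    filter_upwards [eventually_gt_atTop (0:ℝ)] with t ht
    have hr : (-1:ℝ) < α - 1 := by linarith
    have h1 : ((t + T) ^ α - t ^ α) / α = ∫ u in t..(t+T), u ^ (α - 1) := by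
      rw [integral_rpow (Or.inl hr)]
      have : α - 1 + 1 = α := by ring
      rw [this]
    have h2 : (∫ u in t..(t+T), u ^ (α - 1)) ≤ ∫ _u in t..(t+T), t ^ (α - 1) := by
      apply intervalIntegral.integral_mono_on (by linarith)
        (intervalIntegrable_rpow' hr) intervalIntegrable_const
      intro u hu
      exact Real.rpow_le_rpow_of_nonpos ht hu.1 (by linarith)
    rw [intervalIntegral.integral_const, smul_eq_mul] at h2
    have h3 : ((t + T) ^ α - t ^ α) / α ≤ (t + T - t) * t ^ (α - 1) := by rw [h1]; exact h2
    have : t + T - t = T := by ring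
    rw [this] at h3
    calc (t + T) ^ α - t ^ α = α * (((t + T) ^ α - t ^ α) / α) := by field_simp
      _ ≤ α * (T * t ^ (α - 1)) := by
          exact mul_le_mul_of_nonneg_left h3 hα0.le
      _ = α * T * t ^ (α - 1) := by ring
  have hlb : ∀ᶠ t : ℝ in atTop, 0 ≤ (t + T) ^ α - t ^ α := by
    filter_upwards [eventually_gt_atTop (0:ℝ)] with t ht
    have := Real.rpow_le_rpow ht.le (by linarith : t ≤ t + T) hα0.le
    linarith
  have hto : Tendsto (fun t : ℝ => α * T * t ^ (α - 1)) atTop (𝓝 0) := by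
    have : Tendsto (fun t : ℝ => t ^ (-(1 - α))) atTop (𝓝 0) :=
      tendsto_rpow_neg_atTop (by linarith)
    have h := this.const_mul (α * T)
    rw [mul_zero] at h
    refine h.congr (fun t => ?_)
    congr 1
    ring_nf
  exact tendsto_of_tendsto_of_tendsto_of_le_of_le' tendsto_const_nhds hto hlb hub
lemma ap_rigid {g : ℝ → ℝ} {T : ℝ}
    (hap : ∀ ε : ℝ, 0 < ε → ∃ l : ℝ, 0 < l ∧ ∀ a : ℝ,
      ∃ ξ ∈ Icc a (a + l), ∀ t : ℝ, |g (t + ξ) - g t| < ε)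
    (hlim : Tendsto (fun u : ℝ => g (u + T) - g u) atTop (𝓝 0)) :
    ∀ t : ℝ, g (t + T) = g t := by
  intro t
  have key : ∀ ε : ℝ, 0 < ε → |g (t + T) - g t| < 3 * ε := by
    intro ε hε
    obtain ⟨l, hl, hsel⟩ := hap ε hε
    rw [Metric.tendsto_atTop] at hlim
    obtain ⟨A, hA⟩ := hlim ε hε
    obtain ⟨ξ, hξmem, hξ⟩ := hsel (A - t)
    have hAtξ : A ≤ t + ξ := by
      have := hξmem.1; linarith
    have h1 : |g (t + T + ξ) - g (t + T)| < ε := hξ (t + T)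
    have h2 : |g (t + ξ + T) - g (t + ξ)| < ε := by
      have := hA (t + ξ) hAtξ
      rw [Real.dist_eq, sub_zero] at this
      exact this
    have h3 : |g (t + ξ) - g t| < ε := hξ t
    have e : t + T + ξ = t + ξ + T := by ring
    rw [e] at h1
    have : g (t + T) - g t =
        -(g (t + ξ + T) - g (t + T)) + (g (t + ξ + T) - g (t + ξ)) + (g (t + ξ) - g t) := by
      ring
    rw [this]
    calc |-(g (t + ξ + T) - g (t + T)) + (g (t + ξ + T) - g (t + ξ)) + (g (t + ξ) - g t)|
        ≤ |-(g (t + ξ + T) - g (t + T)) + (g (t + ξ + T) - g (t + ξ))| + |g (t + ξ) - g t| :=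
          abs_add_le _ _
      _ ≤ |-(g (t + ξ + T) - g (t + T))| + |g (t + ξ + T) - g (t + ξ)| + |g (t + ξ) - g t| := by
          gcongr; exact abs_add_le _ _
      _ < ε + ε + ε := by rw [abs_neg]; gcongr
      _ = 3 * ε := by ring
  by_contra hne
  have habs : 0 < |g (t + T) - g t| := abs_pos.mpr (sub_ne_zero.mpr hne)
  have := key (|g (t + T) - g t| / 3) (by linarith)
  linarith
lemma base_half {T : ℝ} (hT : 0 < T) {y s : ℝ} (hy : y ∈ Ioo (-1:ℝ) (1/(2*T)))
    (hs : s ∈ Icc (0:ℝ) T) : 1/2 ≤ 1 - y * s := by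
  obtain ⟨hs0, hsT⟩ := hs
  rcases le_or_gt y 0 with hy0 | hy0
  · nlinarith
  · have h1 : y * s ≤ y * T := mul_le_mul_of_nonneg_left hsT hy0.le
    have h2 : y * T < (1/(2*T)) * T := mul_lt_mul_of_pos_right hy.2 hT
    have h3 : (1/(2*T)) * T = 1/2 := by field_simp
    linarith

lemma psi_contOn {T : ℝ} (hT : 0 < T) {f : ℝ → ℝ} (hf : Continuous f)
    {y : ℝ} (hy : y ∈ Ioo (-1:ℝ) (1/(2*T))) (k : ℕ) (e : ℝ) :
    ContinuousOn (fun s : ℝ => s ^ k * (1 - y * s) ^ e * f s) (Icc (0:ℝ) T) := by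
  apply ContinuousOn.mul _ hf.continuousOn
  apply ContinuousOn.mul (continuousOn_pow k)
  intro s hs
  have hbase : (1:ℝ)/2 ≤ 1 - y * s := base_half hT hy hs
  have h0 : ContinuousAt (fun x : ℝ => 1 - y * x) s := by fun_prop
  exact (h0.rpow_const (Or.inl (by intro h; rw [h] at hbase; norm_num at hbase))).continuousWithinAt

lemma psi_hasDeriv {T : ℝ} (hT : 0 < T) {f : ℝ → ℝ} (hf : Continuous f)
    {α : ℝ} (hα0 : 0 < α) (hα1 : α < 1) (k : ℕ) {y₀ : ℝ} (hy₀ : y₀ ∈ Ioo (-1:ℝ) (1/(2*T))) :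
    HasDerivAt (fun y => ∫ s in (0:ℝ)..T, s ^ k * (1 - y * s) ^ (α - 1 - (k:ℝ)) * f s)
      (((k:ℝ) + 1 - α) *
        ∫ s in (0:ℝ)..T, s ^ (k+1) * (1 - y₀ * s) ^ (α - 1 - ((k:ℝ)+1)) * f s) y₀ := by
  obtain ⟨M, hM⟩ := isCompact_Icc.exists_bound_of_continuousOn (s := Icc (0:ℝ) T) hf.continuousOn
  have hM' : ∀ s ∈ Icc (0:ℝ) T, |f s| ≤ |M| := fun s hs => (hM s hs).trans (le_abs_self M)
  obtain ⟨ε, hε, hball⟩ := Metric.mem_nhds_iff.mp (isOpen_Ioo.mem_nhds hy₀)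
  set F : ℝ → ℝ → ℝ := fun y s => s ^ k * (1 - y * s) ^ (α - 1 - (k:ℝ)) * f s with hF
  set F' : ℝ → ℝ → ℝ := fun y s =>
    ((k:ℝ) + 1 - α) * (s ^ (k+1) * (1 - y * s) ^ (α - 1 - ((k:ℝ)+1)) * f s) with hF'
  have hIcc : Set.uIcc (0:ℝ) T = Icc 0 T := uIcc_of_le hT.le
  have hIoc : Set.uIoc (0:ℝ) T = Ioc 0 T := uIoc_of_le hT.le
  have key := intervalIntegral.hasDerivAt_integral_of_dominated_loc_of_deriv_le
    (F := F) (F' := F') (x₀ := y₀) (s := Metric.ball y₀ ε) (a := 0) (b := T) (μ := volume)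
    (bound := fun _ => ((k:ℝ)+1) * (T ^ (k+1) * (((1:ℝ)/2) ^ (α - 1 - ((k:ℝ)+1)) * |M|)))
    (Metric.ball_mem_nhds y₀ hε) ?_ ?_ ?_ ?_ ?_ ?_
  · have := key.2
    rwa [intervalIntegral.integral_const_mul] at this
  · -- hF_meas
    filter_upwards [Metric.ball_mem_nhds y₀ hε] with x hx
    have hx' : x ∈ Ioo (-1:ℝ) (1/(2*T)) := hball hx
    exact ((psi_contOn hT hf hx' k _).mono (hIoc ▸ Ioc_subset_Icc_self)).aestronglyMeasurable
      (hIoc ▸ measurableSet_Ioc)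
  · -- hF_int
    exact ((psi_contOn hT hf hy₀ k _).mono (hIcc ▸ le_refl _)).intervalIntegrable
  · -- hF'_meas
    have : ContinuousOn (F' y₀) (Icc (0:ℝ) T) :=
      (psi_contOn hT hf hy₀ (k+1) (α - 1 - ((k:ℝ)+1))).const_smul ((k:ℝ) + 1 - α)
    exact (this.mono (hIoc ▸ Ioc_subset_Icc_self)).aestronglyMeasurable
      (hIoc ▸ measurableSet_Ioc)
  · -- h_bound
    apply Filter.Eventually.of_forall
    intro s hs x hx
    have hx' : x ∈ Ioo (-1:ℝ) (1/(2*T)) := hball hx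
    have hs' : s ∈ Icc (0:ℝ) T := by
      rw [hIoc] at hs; exact Ioc_subset_Icc_self hs
    have hbase : (1:ℝ)/2 ≤ 1 - x * s := base_half hT hx' hs'
    have hkc : (0:ℝ) ≤ (k:ℝ) := Nat.cast_nonneg k
    have hexp : α - 1 - ((k:ℝ)+1) ≤ 0 := by linarith
    have hb1 : (1 - x * s) ^ (α - 1 - ((k:ℝ)+1)) ≤ ((1:ℝ)/2) ^ (α - 1 - ((k:ℝ)+1)) :=
      Real.rpow_le_rpow_of_nonpos (by norm_num) hbase hexp
    have hb0 : (0:ℝ) ≤ (1 - x * s) ^ (α - 1 - ((k:ℝ)+1)) :=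
      Real.rpow_nonneg (by linarith) _
    have hsk : s ^ (k+1) ≤ T ^ (k+1) := pow_le_pow_left₀ hs'.1 hs'.2 _
    have hsk0 : (0:ℝ) ≤ s ^ (k+1) := pow_nonneg hs'.1 _
    show ‖F' x s‖ ≤ ((k:ℝ)+1) * (T ^ (k+1) * (((1:ℝ)/2) ^ (α - 1 - ((k:ℝ)+1)) * |M|))
    rw [hF']
    rw [Real.norm_eq_abs, abs_mul]
    have hk1 : |(k:ℝ) + 1 - α| ≤ (k:ℝ) + 1 := by
      rw [abs_of_nonneg (by linarith)]; linarith
    have h4 : |s ^ (k+1) * (1 - x * s) ^ (α - 1 - ((k:ℝ)+1)) * f s|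
        ≤ T ^ (k+1) * (((1:ℝ)/2) ^ (α - 1 - ((k:ℝ)+1)) * |M|) := by
      rw [abs_mul, abs_mul, abs_of_nonneg hsk0, abs_of_nonneg hb0, mul_assoc]
      refine mul_le_mul hsk ?_ (by positivity) (by positivity)
      exact mul_le_mul hb1 (hM' s hs') (abs_nonneg _) (by positivity)
    exact mul_le_mul hk1 h4 (abs_nonneg _) (by positivity)
  · exact intervalIntegrable_const
  · -- h_diff
    apply Filter.Eventually.of_forall
    intro s hs x hx
    have hx' : x ∈ Ioo (-1:ℝ) (1/(2*T)) := hball hx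
    have hs' : s ∈ Icc (0:ℝ) T := by
      rw [hIoc] at hs; exact Ioc_subset_Icc_self hs
    have hbase : (1:ℝ)/2 ≤ 1 - x * s := base_half hT hx' hs'
    have h1 : HasDerivAt (fun y : ℝ => 1 - y * s) (-s) x :=
      (hasDerivAt_mul_const s).const_sub 1
    have hne : (1 : ℝ) - x * s ≠ 0 := by intro h; rw [h] at hbase; norm_num at hbase
    have h2 := h1.rpow_const (p := α - 1 - (k:ℝ)) (Or.inl hne)
    have h3 := (h2.const_mul (s ^ k)).mul_const (f s)
    rw [hF']
    rw [show α - 1 - ((k:ℝ)+1) = α - 1 - (k:ℝ) - 1 from by ring]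
    refine h3.congr_deriv ?_
    ring
lemma psi_zero {T : ℝ} (hT : 0 < T) {f : ℝ → ℝ} (hf : Continuous f)
    {α : ℝ} (hα0 : 0 < α) (hα1 : α < 1)
    (hG : ∀ x : ℝ, T < x → (∫ s in (0:ℝ)..T, (x - s) ^ (α - 1) * f s) = 0) :
    ∀ k : ℕ, ∀ y ∈ Ioo (0:ℝ) (1/(2*T)),
      (∫ s in (0:ℝ)..T, s ^ k * (1 - y * s) ^ (α - 1 - (k:ℝ)) * f s) = 0 := by
  intro k
  induction k with
  | zero =>
    intro y hy
    obtain ⟨hy0, hy1⟩ := hy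
    have hinv : 2 * T < 1 / y := by
      rw [lt_div_iff₀ hy0]
      have := (lt_div_iff₀ (by positivity : (0:ℝ) < 2 * T)).mp hy1
      linarith
    have hstep : (∫ s in (0:ℝ)..T, s ^ 0 * (1 - y * s) ^ (α - 1 - ((0:ℕ):ℝ)) * f s)
        = ∫ s in (0:ℝ)..T, y ^ (α - 1) * ((1/y - s) ^ (α - 1) * f s) := by
      apply intervalIntegral.integral_congr
      intro s hs
      rw [uIcc_of_le hT.le] at hs
      have h1 : (1:ℝ) - y * s = y * (1/y - s) := by field_simp
      have h2 : (0:ℝ) ≤ 1/y - s := by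
        have := hs.2; linarith
      simp only [pow_zero, one_mul, Nat.cast_zero, sub_zero]
      rw [h1, Real.mul_rpow hy0.le h2, mul_assoc]
    rw [hstep, intervalIntegral.integral_const_mul, hG (1/y) (by linarith), mul_zero]
  | succ k ih =>
    intro y hy
    have hJ : y ∈ Ioo (-1:ℝ) (1/(2*T)) := ⟨by linarith [hy.1], hy.2⟩
    have hd := psi_hasDeriv hT hf hα0 hα1 k hJ
    have heq : (fun z => ∫ s in (0:ℝ)..T, s ^ k * (1 - z * s) ^ (α - 1 - (k:ℝ)) * f s)
        =ᶠ[nhds y] (fun _ => (0:ℝ)) := by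
      filter_upwards [isOpen_Ioo.mem_nhds hy] with z hz
      exact ih z hz
    have h0 : HasDerivAt
        (fun z => ∫ s in (0:ℝ)..T, s ^ k * (1 - z * s) ^ (α - 1 - (k:ℝ)) * f s) 0 y :=
      (hasDerivAt_const y (0:ℝ)).congr_of_eventuallyEq heq
    have huniq := hd.unique h0
    have hkα : ((k:ℝ) + 1 - α) ≠ 0 := by
      have : (0:ℝ) ≤ (k:ℝ) := Nat.cast_nonneg k
      intro h; nlinarith
    have hz := (mul_eq_zero.mp huniq).resolve_left hkα
    have : α - 1 - ((k+1:ℕ):ℝ) = α - 1 - ((k:ℝ)+1) := by push_cast; ring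
    rw [this]
    exact hz

lemma moments_zero {T : ℝ} (hT : 0 < T) {f : ℝ → ℝ} (hf : Continuous f)
    {α : ℝ} (hα0 : 0 < α) (hα1 : α < 1)
    (hG : ∀ x : ℝ, T < x → (∫ s in (0:ℝ)..T, (x - s) ^ (α - 1) * f s) = 0) :
    ∀ k : ℕ, (∫ s in (0:ℝ)..T, s ^ k * f s) = 0 := by
  intro k
  have hJ0 : (0:ℝ) ∈ Ioo (-1:ℝ) (1/(2*T)) := ⟨by norm_num, by positivity⟩
  have hd := psi_hasDeriv hT hf hα0 hα1 k hJ0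
  set ψ : ℝ → ℝ := fun z => ∫ s in (0:ℝ)..T, s ^ k * (1 - z * s) ^ (α - 1 - (k:ℝ)) * f s with hψ
  have hcw : Tendsto ψ (nhdsWithin 0 (Ioi 0)) (nhds (ψ 0)) :=
    (hd.continuousAt.continuousWithinAt (s := Ioi 0))
  have hmem : Ioo (0:ℝ) (1/(2*T)) ∈ nhdsWithin (0:ℝ) (Ioi 0) :=
    Ioo_mem_nhdsGT (by positivity)
  have heq : ψ =ᶠ[nhdsWithin (0:ℝ) (Ioi 0)] (fun _ => (0:ℝ)) := by
    filter_upwards [hmem] with z hz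
    exact psi_zero hT hf hα0 hα1 hG k z hz
  have h2 : Tendsto ψ (nhdsWithin 0 (Ioi 0)) (nhds 0) :=
    Tendsto.congr' heq.symm tendsto_const_nhds
  have hψ0 : ψ 0 = 0 := tendsto_nhds_unique hcw h2
  rw [hψ] at hψ0
  simp only [zero_mul, sub_zero] at hψ0
  have hcong : (∫ s in (0:ℝ)..T, s ^ k * f s)
      = ∫ s in (0:ℝ)..T, s ^ k * 1 ^ (α - 1 - (k:ℝ)) * f s := by
    apply intervalIntegral.integral_congr
    intro s _
    rw [Real.one_rpow]
    ring
  rw [hcong, hψ0]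
lemma poly_moment {T : ℝ} (hT : 0 < T) {f : ℝ → ℝ} (hf : Continuous f)
    (hmom : ∀ k : ℕ, (∫ s in (0:ℝ)..T, s ^ k * f s) = 0) (p : Polynomial ℝ) :
    (∫ s in (0:ℝ)..T, p.eval s * f s) = 0 := by
  have h1 : (∫ s in (0:ℝ)..T, p.eval s * f s)
      = ∫ s in (0:ℝ)..T, ∑ i ∈ Finset.range (p.natDegree + 1), p.coeff i * (s ^ i * f s) := by
    apply intervalIntegral.integral_congr
    intro s _
    show Polynomial.eval s p * f s
      = ∑ i ∈ Finset.range (p.natDegree + 1), p.coeff i * (s ^ i * f s)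
    rw [Polynomial.eval_eq_sum_range, Finset.sum_mul]
    apply Finset.sum_congr rfl
    intro i _
    ring
  rw [h1, intervalIntegral.integral_finset_sum]
  · apply Finset.sum_eq_zero
    intro i _
    rw [intervalIntegral.integral_const_mul, hmom i, mul_zero]
  · intro i _
    exact (continuous_const.mul ((continuous_pow i).mul hf)).intervalIntegrable _ _

lemma no_moments {T : ℝ} (hT : 0 < T) {f : ℝ → ℝ} (hf : Continuous f)
    (hper : Function.Periodic f T) (hne : f ≠ 0)
    (hmom : ∀ k : ℕ, (∫ s in (0:ℝ)..T, s ^ k * f s) = 0) : False := by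
  set I : ℝ := ∫ s in (0:ℝ)..T, f s * f s with hI
  have hff : IntervalIntegrable (fun s => f s * f s) volume 0 T :=
    (hf.mul hf).intervalIntegrable _ _
  obtain ⟨M, hM⟩ := isCompact_Icc.exists_bound_of_continuousOn
    (s := Icc (0:ℝ) T) hf.continuousOn
  set B : ℝ := |M| + 1 with hB
  have hB0 : 0 < B := by positivity
  have hMB : ∀ s ∈ Icc (0:ℝ) T, |f s| ≤ B := by
    intro s hs
    have h := hM s hs
    rw [Real.norm_eq_abs] at h
    calc |f s| ≤ M := h
      _ ≤ |M| := le_abs_self M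
      _ ≤ B := by rw [hB]; linarith
  have hIzero : I = 0 := by
    have key : ∀ ε : ℝ, 0 < ε → |I| ≤ ε * (B * T) := by
      intro ε hε
      obtain ⟨p, hp⟩ := exists_polynomial_near_of_continuousOn 0 T f hf.continuousOn ε hε
      have hpf : IntervalIntegrable (fun s => p.eval s * f s) volume 0 T :=
        ((p.continuous.mul hf)).intervalIntegrable _ _
      have h4 : (∫ s in (0:ℝ)..T, (f s - p.eval s) * f s)
          = I - ∫ s in (0:ℝ)..T, p.eval s * f s := by
        rw [hI, ← intervalIntegral.integral_sub hff hpf]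
        apply intervalIntegral.integral_congr
        intro s _
        show (f s - Polynomial.eval s p) * f s
          = f s * f s - Polynomial.eval s p * f s
        ring
      have h2 : I = ∫ s in (0:ℝ)..T, (f s - p.eval s) * f s := by
        rw [h4, poly_moment hT hf hmom p, sub_zero]
      rw [h2]
      have habs : |∫ s in (0:ℝ)..T, (f s - p.eval s) * f s|
          ≤ ∫ s in (0:ℝ)..T, |(f s - p.eval s) * f s| :=
        intervalIntegral.abs_integral_le_integral_abs hT.le
      have hmono : (∫ s in (0:ℝ)..T, |(f s - p.eval s) * f s|)
          ≤ ∫ _s in (0:ℝ)..T, ε * B := by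
        apply intervalIntegral.integral_mono_on hT.le
          (((hf.sub p.continuous).mul hf).intervalIntegrable _ _).abs
          intervalIntegrable_const
        intro s hs
        show |(f s - p.eval s) * f s| ≤ ε * B
        rw [abs_mul]
        apply mul_le_mul _ (hMB s hs) (abs_nonneg _) hε.le
        rw [abs_sub_comm]
        exact (hp s hs).le
      rw [intervalIntegral.integral_const, smul_eq_mul, sub_zero] at hmono
      calc |∫ s in (0:ℝ)..T, (f s - p.eval s) * f s|
          ≤ T * (ε * B) := habs.trans hmono
        _ = ε * (B * T) := by ring
    by_contra hne'
    have habs0 : 0 < |I| := abs_pos.mpr hne'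
    have hBT : 0 < B * T := by positivity
    have h := key (|I| / (2 * (B * T))) (by positivity)
    have heq : |I| / (2 * (B * T)) * (B * T) = |I| / 2 := by
      field_simp
    rw [heq] at h
    linarith
  -- now show I > 0, contradiction
  have hexx : ∃ x : ℝ, f x ≠ 0 := by
    by_contra h
    push_neg at h
    exact hne (funext fun x => h x)
  obtain ⟨x, hx⟩ := hexx
  have hex : ∃ y₀ : ℝ, 0 ≤ y₀ ∧ y₀ < T ∧ f y₀ ≠ 0 := by
    refine ⟨x - ⌊x / T⌋ * T, Int.sub_floor_div_mul_nonneg x hT,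
      Int.sub_floor_div_mul_lt x hT, ?_⟩
    rw [hper.sub_int_mul_eq]
    exact hx
  obtain ⟨y₀, hy₀0, hy₀T, hfy₀⟩ := hex
  set c : ℝ := f y₀ * f y₀ / 2 with hc
  have hsq : 0 < f y₀ * f y₀ := mul_self_pos.mpr hfy₀
  have hc0 : 0 < c := by rw [hc]; linarith
  have hV : IsOpen {z : ℝ | c < f z * f z} := isOpen_lt continuous_const (hf.mul hf)
  have hy₀V : y₀ ∈ {z : ℝ | c < f z * f z} := by
    show c < f y₀ * f y₀
    rw [hc]; linarith
  obtain ⟨δ, hδ0, hball⟩ := Metric.isOpen_iff.mp hV y₀ hy₀V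
  set v : ℝ := min (y₀ + δ/2) T with hv
  have huv : y₀ < v := lt_min (by linarith) hy₀T
  have hvT : v ≤ T := min_le_right _ _
  have hsub : ∀ z ∈ Icc y₀ v, c < f z * f z := by
    intro z hz
    obtain ⟨hz1, hz2⟩ := hz
    apply hball
    have hvle : v ≤ y₀ + δ/2 := min_le_left _ _
    have hzb : z ≤ y₀ + δ/2 := le_trans hz2 hvle
    rw [Metric.mem_ball, Real.dist_eq, abs_of_nonneg (by linarith only [hz1])]
    linarith only [hδ0, hzb]
  have hint1 : IntervalIntegrable (fun s => f s * f s) volume 0 y₀ :=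
    (hf.mul hf).intervalIntegrable _ _
  have hint2 : IntervalIntegrable (fun s => f s * f s) volume y₀ v :=
    (hf.mul hf).intervalIntegrable _ _
  have hint3 : IntervalIntegrable (fun s => f s * f s) volume v T :=
    (hf.mul hf).intervalIntegrable _ _
  have hadd1 := intervalIntegral.integral_add_adjacent_intervals hint1 hint2
  have hadd2 := intervalIntegral.integral_add_adjacent_intervals
    (hint1.trans hint2) hint3
  have h01 : 0 ≤ ∫ s in (0:ℝ)..y₀, f s * f s :=
    intervalIntegral.integral_nonneg hy₀0 (fun z _ => mul_self_nonneg _)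
  have h23 : 0 ≤ ∫ s in v..T, f s * f s :=
    intervalIntegral.integral_nonneg hvT (fun z _ => mul_self_nonneg _)
  have hmid : (v - y₀) * c ≤ ∫ s in y₀..v, f s * f s := by
    have := intervalIntegral.integral_mono_on huv.le intervalIntegrable_const hint2
      (fun z hz => (hsub z hz).le)
    rwa [intervalIntegral.integral_const, smul_eq_mul] at this
  have hpos : 0 < (v - y₀) * c := mul_pos (by linarith) hc0
  have : 0 < I := by
    rw [hI, ← hadd2, ← hadd1]
    linarith
  linarith
/-- A continuous function `g : ℝ → ℝ` is almost periodic in the sense of Bohr if for every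
`ε > 0` the set of `ε`-almost periods of `g` is relatively dense in `ℝ`. -/
def AlmostPeriodic (g : ℝ → ℝ) : Prop :=
  Continuous g ∧
    ∀ ε : ℝ, 0 < ε → ∃ l : ℝ, 0 < l ∧ ∀ a : ℝ,
      ∃ ξ ∈ Icc a (a + l), ∀ t : ℝ, |g (t + ξ) - g t| < ε

/-- If `f` is a nonzero continuous `T`-periodic function, `α ∈ (0,1)` and `I^α f` is
bounded on `(0,∞)`, then `I^α f` is not the restriction to `(0,∞)` of an almost
periodic function. -/
theorem rl_integral_not_almost_periodic (T : ℝ) (hT : 0 < T)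
    (f : ℝ → ℝ) (hf : Continuous f) (hper : Function.Periodic f T) (hne : f ≠ 0)
    (α : ℝ) (hα : α ∈ Set.Ioo (0 : ℝ) 1)
    (Iαf : ℝ → ℝ)
    (hIαf : ∀ t : ℝ, Iαf t = (1 / Real.Gamma α) * ∫ s in (0 : ℝ)..t, (t - s) ^ (α - 1) * f s)
    (hbdd : ∃ M : ℝ, ∀ t ∈ Ioi (0 : ℝ), |Iαf t| ≤ M) :
    ¬ ∃ g : ℝ → ℝ, AlmostPeriodic g ∧ ∀ t ∈ Ioi (0 : ℝ), g t = Iαf t := by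
  obtain ⟨hα0, hα1⟩ := hα
  rintro ⟨g, ⟨hgc, hgap⟩, hg⟩
  have hr : (-1:ℝ) < α - 1 := by linarith
  have hΓ : 0 < Real.Gamma α := Real.Gamma_pos_of_pos hα0
  obtain ⟨M, hM⟩ := isCompact_Icc.exists_bound_of_continuousOn
    (s := Icc (0:ℝ) T) hf.continuousOn
  have hM' : ∀ s ∈ Icc (0:ℝ) T, |f s| ≤ |M| := by
    intro s hs
    have h := hM s hs
    rw [Real.norm_eq_abs] at h
    exact h.trans (le_abs_self M)
  -- step 1 : g (u+T) - g u → 0 at +∞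
  have hcdiff : Tendsto (fun u : ℝ => g (u + T) - g u) atTop (𝓝 0) := by
    apply squeeze_zero_norm'
      (a := fun u : ℝ => (1 / Real.Gamma α) * (|M| * (((u + T) ^ α - u ^ α) / α)))
    · filter_upwards [eventually_gt_atTop (0:ℝ)] with u hu
      have hgu : g u = Iαf u := hg u (Set.mem_Ioi.mpr hu)
      have hguT : g (u + T) = Iαf (u + T) := hg (u + T) (Set.mem_Ioi.mpr (by linarith))
      rw [Real.norm_eq_abs, hgu, hguT, hIαf, hIαf, shift_eq hf hper hr u]
      have hsplit : (1 / Real.Gamma α) *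
            ((∫ s in (0:ℝ)..T, (u + T - s) ^ (α-1) * f s)
              + ∫ s in (0:ℝ)..u, (u - s) ^ (α-1) * f s)
          - (1 / Real.Gamma α) * ∫ s in (0:ℝ)..u, (u - s) ^ (α-1) * f s
          = (1 / Real.Gamma α) * ∫ s in (0:ℝ)..T, (u + T - s) ^ (α-1) * f s := by
        ring
      rw [hsplit, abs_mul, abs_of_nonneg (by positivity : (0:ℝ) ≤ 1 / Real.Gamma α)]
      exact mul_le_mul_of_nonneg_left (c_bound hT hf hM' hα0 hα1 hu) (by positivity)
    · have h0 := rpow_diff_tendsto hT hα0 hα1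
      have h1 := h0.const_mul ((1 / Real.Gamma α) * (|M| / α))
      rw [mul_zero] at h1
      refine h1.congr (fun u => ?_)
      ring
  -- step 2 : g is T-periodic
  have hgper : ∀ t : ℝ, g (t + T) = g t := ap_rigid hgap hcdiff
  -- step 3 : the tail integral vanishes
  have hG : ∀ x : ℝ, T < x → (∫ s in (0:ℝ)..T, (x - s) ^ (α - 1) * f s) = 0 := by
    intro x hx
    have ht : (0:ℝ) < x - T := by linarith
    have h1 : Iαf (x - T + T) = Iαf (x - T) := by
      rw [← hg _ (Set.mem_Ioi.mpr (by linarith : (0:ℝ) < x - T + T)),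
        ← hg _ (Set.mem_Ioi.mpr ht), hgper]
    rw [hIαf, hIαf, shift_eq hf hper hr (x - T)] at h1
    have hΓne : (1 / Real.Gamma α) ≠ 0 := by positivity
    have h2 := mul_left_cancel₀ hΓne h1
    have h3 : (∫ s in (0:ℝ)..T, (x - T + T - s) ^ (α-1) * f s) = 0 := by linarith
    rw [show x - T + T = x from by ring] at h3
    exact h3
  exact no_moments hT hf hper hne (moments_zero hT hf hα0 hα1 hG)
end

section
/- Let α > 0. The function t ↦ I^α sin(t) = (1/Γ(α)) ∫₀ᵗ (t−s)^{α−1} sin(s) ds is bounded on (0,∞) if and only if α ≤ 1. -/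
open MeasureTheory intervalIntegral Set

private lemma rl_intble (α t a b : ℝ) (hα : 0 < α) :
    IntervalIntegrable (fun u => u ^ (α - 1) * Real.sin (t - u)) volume a b := by
  have hg : IntervalIntegrable (fun u : ℝ => u ^ (α - 1)) volume a b :=
    intervalIntegral.intervalIntegrable_rpow' (by linarith)
  refine hg.mono_fun ?_ ?_
  · exact hg.def'.aestronglyMeasurable.mul
      ((Real.continuous_sin.comp (continuous_const.sub continuous_id)).aestronglyMeasurable)
  · filter_upwards with x
    simp only [Real.norm_eq_abs, abs_mul]
    exact mul_le_of_le_one_right (abs_nonneg _) (Real.abs_sin_le_one _)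

private lemma rl_subst (α t : ℝ) :
    (∫ s in (0 : ℝ)..t, (t - s) ^ (α - 1) * Real.sin s) =
      ∫ u in (0 : ℝ)..t, u ^ (α - 1) * Real.sin (t - u) := by
  have h := intervalIntegral.integral_comp_sub_left (a := (0 : ℝ)) (b := t)
      (fun x => x ^ (α - 1) * Real.sin (t - x)) t
  simp only [sub_self, sub_zero] at h
  rw [← h]
  refine intervalIntegral.integral_congr fun s _ => ?_
  simp [sub_sub_cancel]

/-- Key identity for unboundedness: F t + F (t+π) ≥ 2 t^(α-1) when α > 1. -/
private lemma rl_key (α t : ℝ) (hα : 1 < α) (ht : 0 < t) :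
    2 * t ^ (α - 1) ≤
      (∫ u in (0 : ℝ)..t, u ^ (α - 1) * Real.sin (t - u)) +
        ∫ u in (0 : ℝ)..(t + Real.pi), u ^ (α - 1) * Real.sin (t + Real.pi - u) := by
  have hα0 : (0 : ℝ) < α := by linarith
  have hπ : (0 : ℝ) < Real.pi := Real.pi_pos
  have h1 : (∫ u in (0 : ℝ)..(t + Real.pi), u ^ (α - 1) * Real.sin (t + Real.pi - u)) =
      -∫ u in (0 : ℝ)..(t + Real.pi), u ^ (α - 1) * Real.sin (t - u) := by
    rw [← intervalIntegral.integral_neg]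
    refine intervalIntegral.integral_congr fun u _ => ?_
    have : t + Real.pi - u = (t - u) + Real.pi := by ring
    rw [this, Real.sin_add_pi]; ring
  have h2 : (∫ u in (0 : ℝ)..(t + Real.pi), u ^ (α - 1) * Real.sin (t - u)) =
      (∫ u in (0 : ℝ)..t, u ^ (α - 1) * Real.sin (t - u)) +
        ∫ u in t..(t + Real.pi), u ^ (α - 1) * Real.sin (t - u) :=
    (intervalIntegral.integral_add_adjacent_intervals (rl_intble α t 0 t hα0)
      (rl_intble α t t (t + Real.pi) hα0)).symm
  rw [h1, h2]
  have h3 : (∫ u in t..(t + Real.pi), u ^ (α - 1) * Real.sin (t - u)) =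
      -∫ u in t..(t + Real.pi), u ^ (α - 1) * Real.sin (u - t) := by
    rw [← intervalIntegral.integral_neg]
    refine intervalIntegral.integral_congr fun u _ => ?_
    rw [show t - u = -(u - t) by ring, Real.sin_neg]; ring
  rw [h3]
  have hconst : (∫ u in t..(t + Real.pi), t ^ (α - 1) * Real.sin (u - t)) =
      2 * t ^ (α - 1) := by
    rw [intervalIntegral.integral_const_mul]
    have : (∫ u in t..(t + Real.pi), Real.sin (u - t)) =
        ∫ x in (0 : ℝ)..Real.pi, Real.sin x := by
      have := intervalIntegral.integral_comp_sub_right (a := t) (b := t + Real.pi)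
        (fun x => Real.sin x) t
      simpa using this
    rw [this, integral_sin]
    simp [Real.cos_pi]
    ring
  have hmono : (∫ u in t..(t + Real.pi), t ^ (α - 1) * Real.sin (u - t)) ≤
      ∫ u in t..(t + Real.pi), u ^ (α - 1) * Real.sin (u - t) := by
    have hf : IntervalIntegrable (fun u : ℝ => t ^ (α - 1) * Real.sin (u - t)) volume t
        (t + Real.pi) :=
      Continuous.intervalIntegrable
        (continuous_const.mul (Real.continuous_sin.comp (continuous_id.sub continuous_const))) _ _
    refine intervalIntegral.integral_mono_on (by linarith) hf ?_ ?_
    · have hg : IntervalIntegrable (fun u : ℝ => u ^ (α - 1)) volume t (t + Real.pi) :=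
        intervalIntegral.intervalIntegrable_rpow' (by linarith)
      refine hg.mono_fun ?_ ?_
      · exact hg.def'.aestronglyMeasurable.mul
          ((Real.continuous_sin.comp (continuous_id.sub continuous_const)).aestronglyMeasurable)
      · filter_upwards with x
        simp only [Real.norm_eq_abs, abs_mul]
        exact mul_le_of_le_one_right (abs_nonneg _) (Real.abs_sin_le_one _)
    · intro u hu
      rcases hu with ⟨hu1, hu2⟩
      have hsin : 0 ≤ Real.sin (u - t) :=
        Real.sin_nonneg_of_nonneg_of_le_pi (by linarith) (by linarith)
      have hpow : t ^ (α - 1) ≤ u ^ (α - 1) :=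
        Real.rpow_le_rpow ht.le hu1 (by linarith)
      exact mul_le_mul_of_nonneg_right hpow hsin
  linarith [hconst, hmono]

/-- Boundedness for 0 < α < 1. -/
private lemma rl_bdd (α t : ℝ) (h0 : 0 < α) (h1 : α < 1) (ht : 0 < t) :
    |∫ u in (0 : ℝ)..t, u ^ (α - 1) * Real.sin (t - u)| ≤ 2 / α + 3 := by
  have hα1 : (0:ℝ) < 2 / α := by positivity
  have habs : ∀ a b : ℝ, 0 ≤ a → a ≤ b →
      |∫ u in a..b, u ^ (α - 1) * Real.sin (t - u)| ≤
        |(b ^ α - a ^ α) / α| := by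
    intro a b ha hab
    have hint : IntervalIntegrable (fun u : ℝ => u ^ (α - 1)) volume a b :=
      intervalIntegral.intervalIntegrable_rpow' (by linarith)
    have key : ‖∫ u in a..b, u ^ (α - 1) * Real.sin (t - u)‖ ≤
        |∫ u in a..b, u ^ (α - 1)| := by
      refine intervalIntegral.norm_integral_le_abs_of_norm_le
        (f := fun u => u ^ (α - 1) * Real.sin (t - u)) ?_ hint
      filter_upwards [ae_restrict_mem measurableSet_uIoc] with x hx
      rw [Set.uIoc_of_le hab] at hx
      have hx0 : 0 < x := lt_of_le_of_lt ha hx.1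
      rw [Real.norm_eq_abs, abs_mul, abs_of_nonneg (Real.rpow_nonneg hx0.le _)]
      exact mul_le_of_le_one_right (Real.rpow_nonneg hx0.le _) (Real.abs_sin_le_one _)
    have hval : (∫ u in a..b, u ^ (α - 1)) = (b ^ α - a ^ α) / α := by
      rw [integral_rpow (Or.inl (by linarith))]
      norm_num
    rw [hval, Real.norm_eq_abs] at key
    exact key
  rcases le_or_gt t 1 with htle | htgt
  · -- small t
    have h := habs 0 t le_rfl ht.le
    have h0α : (0:ℝ) ^ α = 0 := Real.zero_rpow h0.ne'
    have htα : t ^ α ≤ 1 := Real.rpow_le_one ht.le htle h0.le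
    have htα0 : 0 ≤ t ^ α := Real.rpow_nonneg ht.le _
    rw [h0α] at h
    have : |(t ^ α - 0) / α| ≤ 1 / α := by
      rw [sub_zero, abs_div, abs_of_pos h0, abs_of_nonneg htα0]
      exact (div_le_div_iff_of_pos_right h0).mpr htα
    calc |∫ u in (0:ℝ)..t, u ^ (α - 1) * Real.sin (t - u)| ≤ |(t ^ α - 0) / α| := h
      _ ≤ 1 / α := this
      _ ≤ 2 / α + 3 := by
          have h12 : (1:ℝ) / α ≤ 2 / α := (div_le_div_iff_of_pos_right h0).mpr one_le_two
          linarith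
  · -- t > 1 : split at 1 and integrate by parts on [1, t]
    have hsplit : (∫ u in (0:ℝ)..t, u ^ (α - 1) * Real.sin (t - u)) =
        (∫ u in (0:ℝ)..1, u ^ (α - 1) * Real.sin (t - u)) +
          ∫ u in (1:ℝ)..t, u ^ (α - 1) * Real.sin (t - u) :=
      (intervalIntegral.integral_add_adjacent_intervals (rl_intble α t 0 1 h0)
        (rl_intble α t 1 t h0)).symm
    have hpart1 : |∫ u in (0:ℝ)..1, u ^ (α - 1) * Real.sin (t - u)| ≤ 1 / α := by
      have h := habs 0 1 le_rfl zero_le_one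
      rw [Real.zero_rpow h0.ne', Real.one_rpow, sub_zero, abs_div,
        abs_of_pos h0, abs_one] at h
      exact h
    have huIcc : Set.uIcc (1:ℝ) t = Set.Icc 1 t := Set.uIcc_of_le htgt.le
    -- integration by parts on [1, t]
    have hderiv_u : ∀ x ∈ Set.uIcc (1:ℝ) t, HasDerivAt (fun y : ℝ => y ^ (α - 1))
        ((α - 1) * x ^ (α - 1 - 1)) x := by
      intro x hx
      rw [huIcc] at hx
      exact Real.hasDerivAt_rpow_const (Or.inl (by linarith [hx.1]))
    have hderiv_v : ∀ x ∈ Set.uIcc (1:ℝ) t, HasDerivAt (fun y : ℝ => Real.cos (t - y))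
        (Real.sin (t - x)) x := by
      intro x _
      have h1 : HasDerivAt (fun y : ℝ => t - y) (-1) x := (hasDerivAt_id x).const_sub t
      have h2 := (Real.hasDerivAt_cos (t - x)).comp x h1
      simpa [Function.comp_def] using h2
    have hcont_pos : ∀ x ∈ Set.uIcc (1:ℝ) t, x ≠ 0 := by
      intro x hx; rw [huIcc] at hx; exact by linarith [hx.1]
    have hu'int : IntervalIntegrable (fun x : ℝ => (α - 1) * x ^ (α - 1 - 1)) volume 1 t :=
      (intervalIntegral.intervalIntegrable_rpow
        (Or.inr fun h => by simpa using hcont_pos 0 h rfl)).const_mul _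
    have hv'int : IntervalIntegrable (fun x : ℝ => Real.sin (t - x)) volume 1 t :=
      (Real.continuous_sin.comp (continuous_const.sub continuous_id)).intervalIntegrable 1 t
    have hibp := intervalIntegral.integral_mul_deriv_eq_deriv_mul hderiv_u hderiv_v hu'int hv'int
    -- hibp : ∫ x in 1..t, x^(α-1) * sin (t-x)
    --      = t^(α-1) * cos (t-t) - 1^(α-1) * cos (t-1) - ∫ x in 1..t, (α-1)*x^(α-2) * cos (t-x)
    have hrem : |∫ x in (1:ℝ)..t, (α - 1) * x ^ (α - 1 - 1) * Real.cos (t - x)| ≤ 1 := by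
      have hbint : IntervalIntegrable (fun x : ℝ => (1 - α) * x ^ (α - 1 - 1)) volume 1 t :=
        (intervalIntegral.intervalIntegrable_rpow
          (Or.inr fun h => by simpa using hcont_pos 0 h rfl)).const_mul _
      have hle : ‖∫ x in (1:ℝ)..t, (α - 1) * x ^ (α - 1 - 1) * Real.cos (t - x)‖ ≤
          |∫ x in (1:ℝ)..t, (1 - α) * x ^ (α - 1 - 1)| := by
        refine intervalIntegral.norm_integral_le_abs_of_norm_le
          (f := fun x => (α - 1) * x ^ (α - 1 - 1) * Real.cos (t - x)) ?_ hbint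
        filter_upwards [ae_restrict_mem measurableSet_uIoc] with x hx
        rw [Set.uIoc_of_le htgt.le] at hx
        have hx0 : (0:ℝ) < x := lt_trans one_pos hx.1
        have hp : 0 ≤ x ^ (α - 1 - 1) := Real.rpow_nonneg hx0.le _
        rw [Real.norm_eq_abs, abs_mul, abs_mul, abs_of_nonneg hp]
        calc |α - 1| * x ^ (α - 1 - 1) * |Real.cos (t - x)| ≤
              |α - 1| * x ^ (α - 1 - 1) * 1 := by
                apply mul_le_mul_of_nonneg_left (Real.abs_cos_le_one _) (by positivity)
          _ = (1 - α) * x ^ (α - 1 - 1) := by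
              rw [mul_one, abs_of_nonpos (by linarith : α - 1 ≤ 0)]
              ring
      have hcompute : (∫ x in (1:ℝ)..t, (1 - α) * x ^ (α - 1 - 1)) = 1 - t ^ (α - 1) := by
        rw [intervalIntegral.integral_const_mul,
          integral_rpow (Or.inr ⟨by intro h; apply h1.ne; linarith [h], fun h => by simpa using hcont_pos 0 h rfl⟩)]
        have heq : α - 1 - 1 + 1 = α - 1 := by ring
        have hne : α - 1 ≠ 0 := by intro h; apply h1.ne; linarith
        rw [heq, Real.one_rpow]
        field_simp
        ring
      rw [hcompute, Real.norm_eq_abs] at hle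
      have ht1 : t ^ (α - 1) ≤ 1 :=
        Real.rpow_le_one_of_one_le_of_nonpos htgt.le (by linarith)
      have ht0 : 0 ≤ t ^ (α - 1) := Real.rpow_nonneg (by linarith) _
      calc |∫ x in (1:ℝ)..t, (α - 1) * x ^ (α - 1 - 1) * Real.cos (t - x)| ≤
            |1 - t ^ (α - 1)| := hle
        _ ≤ 1 := by rw [abs_of_nonneg (by linarith)]; linarith
    have hpart2 : |∫ u in (1:ℝ)..t, u ^ (α - 1) * Real.sin (t - u)| ≤ 3 := by
      rw [hibp]
      have ht1 : t ^ (α - 1) ≤ 1 :=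
        Real.rpow_le_one_of_one_le_of_nonpos htgt.le (by linarith)
      have ht0 : 0 ≤ t ^ (α - 1) := Real.rpow_nonneg (by linarith) _
      have hb : |t ^ (α - 1) * Real.cos (t - t) - (1:ℝ) ^ (α - 1) * Real.cos (t - 1)| ≤ 2 := by
        rw [sub_self, Real.cos_zero, mul_one, Real.one_rpow, one_mul]
        have := Real.abs_cos_le_one (t - 1)
        rw [abs_sub_le_iff]
        constructor <;> [skip; skip] <;>
          cases' abs_le.mp this with hc1 hc2 <;> linarith
      calc |t ^ (α - 1) * Real.cos (t - t) - (1:ℝ) ^ (α - 1) * Real.cos (t - 1) -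
            ∫ x in (1:ℝ)..t, (α - 1) * x ^ (α - 1 - 1) * Real.cos (t - x)| ≤
            |t ^ (α - 1) * Real.cos (t - t) - (1:ℝ) ^ (α - 1) * Real.cos (t - 1)| +
              |∫ x in (1:ℝ)..t, (α - 1) * x ^ (α - 1 - 1) * Real.cos (t - x)| :=
          abs_sub _ _
        _ ≤ 2 + 1 := add_le_add hb hrem
        _ = 3 := by norm_num
    rw [hsplit]
    calc |(∫ u in (0:ℝ)..1, u ^ (α - 1) * Real.sin (t - u)) +
          ∫ u in (1:ℝ)..t, u ^ (α - 1) * Real.sin (t - u)| ≤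
          |∫ u in (0:ℝ)..1, u ^ (α - 1) * Real.sin (t - u)| +
            |∫ u in (1:ℝ)..t, u ^ (α - 1) * Real.sin (t - u)| := abs_add_le _ _
      _ ≤ 1 / α + 3 := add_le_add hpart1 hpart2
      _ ≤ 2 / α + 3 := by
          have h12 : (1:ℝ) / α ≤ 2 / α := (div_le_div_iff_of_pos_right h0).mpr one_le_two
          linarith

/-- For `α > 0`, the fractional integral `I^α sin` is bounded on `(0,∞)` if and only if
`α ≤ 1`. -/
theorem rl_integral_sin_bounded_iff (α : ℝ) (hα : 0 < α) :
    (∃ M : ℝ, ∀ t ∈ Ioi (0 : ℝ),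
        |(1 / Real.Gamma α) * ∫ s in (0 : ℝ)..t, (t - s) ^ (α - 1) * Real.sin s| ≤ M) ↔
      α ≤ 1 := by
  have hΓ : 0 < Real.Gamma α := Real.Gamma_pos_of_pos hα
  constructor
  · rintro ⟨M, hM⟩
    by_contra hc
    push_neg at hc
    have habs : ∀ t : ℝ, 0 < t →
        |∫ u in (0:ℝ)..t, u ^ (α - 1) * Real.sin (t - u)| ≤ M * Real.Gamma α := by
      intro t ht
      have h := hM t ht
      rw [rl_subst] at h
      rw [abs_mul, abs_of_pos (by positivity : (0:ℝ) < 1 / Real.Gamma α)] at h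
      calc |∫ u in (0:ℝ)..t, u ^ (α - 1) * Real.sin (t - u)| =
            (1 / Real.Gamma α * |∫ u in (0:ℝ)..t, u ^ (α - 1) * Real.sin (t - u)|) *
              Real.Gamma α := by field_simp
        _ ≤ M * Real.Gamma α := mul_le_mul_of_nonneg_right h hΓ.le
    set C := M * Real.Gamma α with hC
    have hC0 : 0 ≤ C := le_trans (abs_nonneg _) (habs 1 one_pos)
    set t := (C + 1) ^ (α - 1)⁻¹ with htdef
    have ht : 0 < t := Real.rpow_pos_of_pos (by linarith) _
    have htpow : t ^ (α - 1) = C + 1 :=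
      Real.rpow_inv_rpow (by linarith) (by intro h; apply hc.ne'; linarith [h])
    have hkey := rl_key α t hc ht
    have h1 := habs t ht
    have h2 := habs (t + Real.pi) (by linarith [Real.pi_pos])
    rw [htpow] at hkey
    have ha1 := abs_le.mp h1
    have ha2 := abs_le.mp h2
    linarith [ha1.2, ha2.2, hkey]
  · intro hle
    rcases eq_or_lt_of_le hle with heq | hlt
    · -- α = 1
      subst heq
      refine ⟨2, fun t ht => ?_⟩
      have : (∫ s in (0:ℝ)..t, (t - s) ^ ((1:ℝ) - 1) * Real.sin s) =
          ∫ s in (0:ℝ)..t, Real.sin s := by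
        refine intervalIntegral.integral_congr fun s _ => ?_
        norm_num
      rw [this, integral_sin, Real.Gamma_one, Real.cos_zero]
      have := Real.abs_cos_le_one t
      rw [one_div_one, one_mul, abs_sub_le_iff] at *
      cases' abs_le.mp this with hc1 hc2
      constructor <;> linarith
    · -- α < 1
      refine ⟨(2 / α + 3) / Real.Gamma α, fun t ht => ?_⟩
      rw [rl_subst, abs_mul, abs_of_pos (by positivity : (0:ℝ) < 1 / Real.Gamma α)]
      rw [div_eq_mul_inv (2 / α + 3), mul_comm (2 / α + 3), ← one_div]
      exact mul_le_mul_of_nonneg_left (rl_bdd α t hα hlt ht) (by positivity)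
end
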